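/- For N ≥ 2, the real linear span of the set {v vᵀ − 1_N : v ∈ {−1,1}^N a sign vector} equals the space of all real symmetric N×N matrices with vanishing diagonal; in particular this span has dimension N(N−1)/2. -/

import Mathlib

open Matrix

namespace SpanIsing

variable (N : ℕ)

/-- symmetric matrices with zero diagonal -/
def symZero : Submodule ℝ (Matrix (Fin N) (Fin N) ℝ) where
  carrier := {A | A.IsSymm ∧ ∀ i, A i i = 0}
  add_mem' := by
    rintro A B ⟨hA, hA0⟩ ⟨hB, hB0⟩
    refine ⟨?_, fun i => by simp [Matrix.add_apply, hA0 i, hB0 i]⟩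
    simp [Matrix.IsSymm, Matrix.transpose_add, hA.eq, hB.eq]
  zero_mem' := ⟨by simp [Matrix.IsSymm], fun i => rfl⟩
  smul_mem' := by
    rintro c A ⟨hA, hA0⟩
    refine ⟨?_, fun i => by simp [Matrix.smul_apply, hA0 i]⟩
    simp [Matrix.IsSymm, Matrix.transpose_smul, hA.eq]

abbrev ι := Σ j : Fin N, Fin (j : ℕ)

noncomputable def toFun : symZero N →ₗ[ℝ] (ι N → ℝ) where
  toFun A := fun p => A.1 ⟨p.2.1, p.2.2.trans p.1.2⟩ p.1
  map_add' A B := rfl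
  map_smul' c A := rfl

def mk (g : ι N → ℝ) : Matrix (Fin N) (Fin N) ℝ :=
  Matrix.of fun k l =>
    if h : (k : ℕ) < l then g ⟨l, ⟨k, h⟩⟩
    else if h' : (l : ℕ) < k then g ⟨k, ⟨l, h'⟩⟩ else 0

lemma mk_mem (g : ι N → ℝ) : mk N g ∈ symZero N := by
  constructor
  · ext k l
    simp only [mk, Matrix.transpose_apply, Matrix.of_apply]
    rcases lt_trichotomy (k : ℕ) (l : ℕ) with h | h | h
    · rw [dif_neg (by omega), dif_pos h, dif_pos h]
    · rw [dif_neg (by omega), dif_neg (by omega), dif_neg (by omega), dif_neg (by omega)]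
    · rw [dif_pos h, dif_neg (by omega), dif_pos h]
  · intro i
    simp [mk]

noncomputable def invFun : (ι N → ℝ) →ₗ[ℝ] symZero N where
  toFun g := ⟨mk N g, mk_mem N g⟩
  map_add' g g' := by
    ext k l
    simp only [mk, Matrix.of_apply, Submodule.coe_add, Matrix.add_apply, Pi.add_apply]
    split_ifs <;> simp
  map_smul' c g := by
    ext k l
    simp only [mk, Matrix.of_apply, RingHom.id_apply, SetLike.val_smul, Matrix.smul_apply,
      Pi.smul_apply, smul_eq_mul]
    split_ifs <;> simp

noncomputable def equiv : symZero N ≃ₗ[ℝ] (ι N → ℝ) := by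
  refine LinearEquiv.ofLinear (toFun N) (invFun N) ?_ ?_
  · ext g p
    obtain ⟨j, i⟩ := p
    simp only [toFun, invFun, mk, LinearMap.coe_comp, Function.comp_apply, LinearMap.coe_mk,
      AddHom.coe_mk, Matrix.of_apply, LinearMap.id_apply]
    exact dif_pos i.2
  · ext A k l
    obtain ⟨A, hA, hA0⟩ := A
    simp only [toFun, invFun, mk, LinearMap.coe_comp, Function.comp_apply, LinearMap.coe_mk,
      AddHom.coe_mk, Matrix.of_apply, LinearMap.id_apply]
    rcases lt_trichotomy (k : ℕ) (l : ℕ) with h | h | h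
    · rw [dif_pos h]; rfl
    · rw [dif_neg (by omega), dif_neg (by omega)]
      have : k = l := Fin.ext h
      subst this
      exact (hA0 k).symm
    · rw [dif_neg (by omega), dif_pos h]
      exact congrFun (congrFun hA.eq k) l

lemma finrank_symZero : Module.finrank ℝ (symZero N) = N * (N - 1) / 2 := by
  rw [(equiv N).finrank_eq, Module.finrank_pi, Fintype.card_sigma]
  simp only [Fintype.card_fin]
  rw [show (∑ x : Fin N, (x:ℕ)) = ∑ i ∈ Finset.range N, i from Fin.sum_univ_eq_sum_range (fun i => i) N, Finset.sum_range_id]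

end SpanIsing


open SpanIsing in
/-- For `N ≥ 2`, the linear span of the centered Ising matrices `v vᵀ − 1_N` (over sign
vectors `v ∈ {−1,1}^N`) is the space of symmetric matrices with vanishing diagonal,
whose dimension is `N(N−1)/2`. -/
theorem span_centered_ising (N : ℕ) (hN : 2 ≤ N) :
    (Submodule.span ℝ
        {A : Matrix (Fin N) (Fin N) ℝ |
          ∃ v : Fin N → ℝ, (∀ i, v i = 1 ∨ v i = -1) ∧ A = vecMulVec v v - 1} : 
        Set (Matrix (Fin N) (Fin N) ℝ)) =
      {A : Matrix (Fin N) (Fin N) ℝ | A.IsSymm ∧ ∀ i, A i i = 0} ∧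
    Module.finrank ℝ
        (Submodule.span ℝ
          {A : Matrix (Fin N) (Fin N) ℝ |
            ∃ v : Fin N → ℝ, (∀ i, v i = 1 ∨ v i = -1) ∧ A = vecMulVec v v - 1}) =
      N * (N - 1) / 2 := by
  set S := {A : Matrix (Fin N) (Fin N) ℝ |
      ∃ v : Fin N → ℝ, (∀ i, v i = 1 ∨ v i = -1) ∧ A = vecMulVec v v - 1} with hS
  have hspan : Submodule.span ℝ S = symZero N := by
    apply le_antisymm
    · rw [Submodule.span_le]
      rintro A ⟨v, hv, rfl⟩
      constructor
      · ext k l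
        simp only [Matrix.transpose_apply, Matrix.sub_apply, Matrix.vecMulVec_apply,
          Matrix.one_apply]
        rw [mul_comm]
        congr 1
        simp [eq_comm]
      · intro i
        rcases hv i with h | h <;>
          simp [Matrix.sub_apply, Matrix.vecMulVec_apply, h, Matrix.one_apply]
    · -- key: E i j + E j i ∈ span for i ≠ j
      have key : ∀ i j : Fin N, i ≠ j →
          (single i j (1:ℝ) + single j i 1) ∈ Submodule.span ℝ S := by
        intro i j hij
        set u : Fin N → ℝ := fun _ => 1 with hu
        set wi : Fin N → ℝ := fun k => if k = i then -1 else 1 with hwi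
        set wj : Fin N → ℝ := fun k => if k = j then -1 else 1 with hwj
        set x : Fin N → ℝ := fun k => if k = i ∨ k = j then -1 else 1 with hx
        have hji : j ≠ i := Ne.symm hij
        have memM : ∀ v : Fin N → ℝ, (∀ i, v i = 1 ∨ v i = -1) →
            vecMulVec v v - 1 ∈ Submodule.span ℝ S :=
          fun v hv => Submodule.subset_span ⟨v, hv, rfl⟩
        have h1 := memM u (fun k => Or.inl rfl)
        have h2 := memM x (fun k => by by_cases h : k = i ∨ k = j <;> simp [hx, h])
        have h3 := memM wi (fun k => by by_cases h : k = i <;> simp [hwi, h])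
        have h4 := memM wj (fun k => by by_cases h : k = j <;> simp [hwj, h])
        have hcomb : (single i j (1:ℝ) + single j i 1) =
            (4:ℝ)⁻¹ • ((vecMulVec u u - 1) + (vecMulVec x x - 1)
              - (vecMulVec wi wi - 1) - (vecMulVec wj wj - 1)) := by
          ext k l
          clear h1 h2 h3 h4 memM hS
          simp only [Matrix.add_apply, Matrix.sub_apply, Matrix.smul_apply,
            Matrix.vecMulVec_apply, Matrix.one_apply, Matrix.single,
            Matrix.of_apply, smul_eq_mul, hu, hwi, hwj, hx]
          by_cases hki : k = i <;> by_cases hkj : k = j <;> by_cases hli : l = i <;>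
            by_cases hlj : l = j <;> by_cases hkl : k = l <;> simp_all <;> first | ring1 | (rintro rfl; simp_all) | (split_ifs <;> simp_all <;> try ring1) | (rintro rfl; split_ifs <;> simp_all)
        rw [hcomb]
        exact Submodule.smul_mem _ _ (Submodule.sub_mem _ (Submodule.sub_mem _
          (Submodule.add_mem _ h1 h2) h3) h4)
      rintro A ⟨hA, hA0⟩
      have hrep : A = ∑ i : Fin N, ∑ j : Fin N,
          ((2:ℝ)⁻¹ * A i j) • (single i j (1:ℝ) + single j i 1) := by
        ext k l
        simp only [Matrix.sum_apply, Matrix.smul_apply, Matrix.add_apply,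
          Matrix.single, Matrix.of_apply, smul_eq_mul, mul_add]
        rw [Finset.sum_comm]
        have key2 : ∀ j : Fin N, (∑ i, ((2:ℝ)⁻¹ * A i j * (if i = k ∧ j = l then 1 else 0) +
            (2:ℝ)⁻¹ * A i j * (if j = k ∧ i = l then 1 else 0))) =
            (if j = l then (2:ℝ)⁻¹ * A k j else 0) + (if j = k then (2:ℝ)⁻¹ * A l j else 0) := by
          intro j
          rw [Finset.sum_add_distrib]
          congr 1
          · rw [Finset.sum_eq_single k] <;> intros <;> simp_all [mul_ite]
          · rw [Finset.sum_eq_single l] <;> intros <;> simp_all [mul_ite]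
        rw [Finset.sum_congr rfl fun j _ => key2 j, Finset.sum_add_distrib]
        simp only [Finset.sum_ite_eq', Finset.mem_univ, if_true]
        have hsymm : A l k = A k l := congrFun (congrFun hA.eq k) l
        rw [hsymm]; ring
      rw [hrep]
      apply Submodule.sum_mem
      intro i _
      apply Submodule.sum_mem
      intro j _
      by_cases hij : i = j
      · subst hij
        rw [hA0 i]
        simp
      · exact Submodule.smul_mem _ _ (key i j hij)
  refine ⟨?_, ?_⟩
  · rw [hspan]; rfl
  · rw [hspan]; exact finrank_symZero N
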